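/- q_0^{(1)} = C_2, and for every Q ∈ P_I(C_2) with Q < 1, P_cor^opt(Q) = (1−Q)·C_2 (equivalently, R_cor^opt(Q) = P_cor^opt(Q)/(1−Q) = C_2). -/

import Mathlib

set_option linter.unusedSectionVars false
set_option linter.unusedVariables false
set_option linter.unusedTactic false
set_option maxHeartbeats 1000000


open Matrix ComplexOrder

noncomputable section

namespace FRIR

/-- A three-outcome POVM on a qubit: `M₀` is the inconclusive outcome. -/
def IsPOVM (M₀ M₁ M₂ : Matrix (Fin 2) (Fin 2) ℂ) : Prop :=
  M₀.PosSemidef ∧ M₁.PosSemidef ∧ M₂.PosSemidef ∧ M₀ + M₁ + M₂ = 1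

/-- `ρ₀ = q₁ρ₁ + q₂ρ₂`. -/
def rho0 (q₁ q₂ : ℝ) (ρ₁ ρ₂ : Matrix (Fin 2) (Fin 2) ℂ) : Matrix (Fin 2) (Fin 2) ℂ :=
  (q₁ : ℂ) • ρ₁ + (q₂ : ℂ) • ρ₂

/-- The probability of the inconclusive result, `P_I = tr(ρ₀M₀)`. -/
def PIof (q₁ q₂ : ℝ) (ρ₁ ρ₂ M₀ : Matrix (Fin 2) (Fin 2) ℂ) : ℝ :=
  (Matrix.trace (rho0 q₁ q₂ ρ₁ ρ₂ * M₀)).re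

/-- `P_cor = q₁tr(ρ₁M₁) + q₂tr(ρ₂M₂)`. -/
def Pcor (q₁ q₂ : ℝ) (ρ₁ ρ₂ M₁ M₂ : Matrix (Fin 2) (Fin 2) ℂ) : ℝ :=
  q₁ * (Matrix.trace (ρ₁ * M₁)).re + q₂ * (Matrix.trace (ρ₂ * M₂)).re

/-- `P̄_cor = q·tr(ρ₀M₀) + q₁tr(ρ₁M₁) + q₂tr(ρ₂M₂)`. -/
def PbarCor (q q₁ q₂ : ℝ) (ρ₁ ρ₂ M₀ M₁ M₂ : Matrix (Fin 2) (Fin 2) ℂ) : ℝ :=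
  q * PIof q₁ q₂ ρ₁ ρ₂ M₀ + Pcor q₁ q₂ ρ₁ ρ₂ M₁ M₂

/-- `P̄_cor^opt(q)`: the maximal value of `P̄_cor` over all POVMs. -/
def PbarOpt (q q₁ q₂ : ℝ) (ρ₁ ρ₂ : Matrix (Fin 2) (Fin 2) ℂ) : ℝ :=
  sSup {x : ℝ | ∃ M₀ M₁ M₂, IsPOVM M₀ M₁ M₂ ∧ PbarCor q q₁ q₂ ρ₁ ρ₂ M₀ M₁ M₂ = x}

/-- `P_cor^opt(Q)`: the maximal value of `P_cor` over POVMs with `P_I = Q`. -/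
def PcorOpt (Q q₁ q₂ : ℝ) (ρ₁ ρ₂ : Matrix (Fin 2) (Fin 2) ℂ) : ℝ :=
  sSup {x : ℝ | ∃ M₀ M₁ M₂, IsPOVM M₀ M₁ M₂ ∧
    PIof q₁ q₂ ρ₁ ρ₂ M₀ = Q ∧ Pcor q₁ q₂ ρ₁ ρ₂ M₁ M₂ = x}

/-- `P_I(q) = { tr(ρ₀M₀) : POVMs attaining P̄_cor^opt(q) }`. -/
def PIset (q q₁ q₂ : ℝ) (ρ₁ ρ₂ : Matrix (Fin 2) (Fin 2) ℂ) : Set ℝ :=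
  {Q : ℝ | ∃ M₀ M₁ M₂, IsPOVM M₀ M₁ M₂ ∧
    PbarCor q q₁ q₂ ρ₁ ρ₂ M₀ M₁ M₂ = PbarOpt q q₁ q₂ ρ₁ ρ₂ ∧ PIof q₁ q₂ ρ₁ ρ₂ M₀ = Q}

/-- `q₀⁽⁰⁾ = sup{q > 0 : 0 ∈ P_I(q)}`. -/
def q0low (q₁ q₂ : ℝ) (ρ₁ ρ₂ : Matrix (Fin 2) (Fin 2) ℂ) : ℝ :=
  sSup {q : ℝ | 0 < q ∧ (0 : ℝ) ∈ PIset q q₁ q₂ ρ₁ ρ₂}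

/-- `q₀⁽¹⁾ = inf{q > 0 : 1 ∈ P_I(q)}`. -/
def q0high (q₁ q₂ : ℝ) (ρ₁ ρ₂ : Matrix (Fin 2) (Fin 2) ℂ) : ℝ :=
  sInf {q : ℝ | 0 < q ∧ (1 : ℝ) ∈ PIset q q₁ q₂ ρ₁ ρ₂}

section Helpers

variable {n : Type*} [Fintype n] [DecidableEq n]

lemma psd_real_smul {c : ℝ} (hc : 0 ≤ c) {M : Matrix n n ℂ} (hM : M.PosSemidef) :
    ((c : ℂ) • M).PosSemidef := by
  refine Matrix.PosSemidef.of_dotProduct_mulVec_nonneg ?_ ?_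
  · unfold Matrix.IsHermitian
    rw [conjTranspose_smul, hM.1.eq]
    congr 1
    simp [Complex.star_def]
  · intro x
    rw [smul_mulVec, dotProduct_smul, smul_eq_mul]
    exact mul_nonneg (by exact_mod_cast hc) (hM.dotProduct_mulVec_nonneg x)

lemma psd_diag_nonneg {M : Matrix n n ℂ} (hM : M.PosSemidef) (i : n) : 0 ≤ M i i := by
  exact hM.diag_nonneg

lemma psd_trace_re_nonneg {M : Matrix n n ℂ} (hM : M.PosSemidef) : 0 ≤ (M.trace).re := by
  have h : (0:ℂ) ≤ M.trace := Finset.sum_nonneg fun i _ => psd_diag_nonneg hM i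
  exact (Complex.le_def.mp h).1

lemma trace_mul_psd_nonneg {A B : Matrix n n ℂ} (hA : A.PosSemidef) (hB : B.PosSemidef) :
    0 ≤ (Matrix.trace (A * B)).re := by
  obtain ⟨m, v, rfl⟩ := Matrix.posSemidef_iff_eq_sum_vecMulVec.mp hB
  rw [Finset.mul_sum, Matrix.trace_sum, Complex.re_sum]
  refine Finset.sum_nonneg fun i _ => ?_
  have e : Matrix.trace (A * vecMulVec (v i) (star (v i))) = star (v i) ⬝ᵥ (A *ᵥ v i) := by
    simp only [Matrix.trace, Matrix.diag, Matrix.mul_apply, Matrix.vecMulVec_apply, dotProduct,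
      Matrix.mulVec, Finset.mul_sum]
    congr 1; ext j; congr 1; ext k; ring
  have h := hA.dotProduct_mulVec_nonneg (v i)
  rw [← e] at h
  exact (Complex.le_def.mp h).1

lemma posSemidef_vecMulVec_star (v : n → ℂ) : (vecMulVec v (star v)).PosSemidef := by
  refine Matrix.PosSemidef.of_dotProduct_mulVec_nonneg ?_ ?_
  · ext i j
    simp [Matrix.conjTranspose_apply, Matrix.vecMulVec_apply, mul_comm]
  · intro x
    have h1 : vecMulVec v (star v) *ᵥ x = (star v ⬝ᵥ x) • v := by
      ext i
      simp [Matrix.mulVec, Matrix.vecMulVec_apply, dotProduct, Finset.mul_sum, Finset.sum_mul,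
        mul_assoc, mul_comm, mul_left_comm]
    rw [h1, dotProduct_smul, smul_eq_mul]
    have h2 : star x ⬝ᵥ v = star (star v ⬝ᵥ x) := by
      simp [dotProduct, star_sum, mul_comm]
    rw [h2]
    exact mul_star_self_nonneg _

lemma vecMulVec_mulVec (w v x : n → ℂ) :
    vecMulVec w v *ᵥ x = (v ⬝ᵥ x) • w := by
  ext i
  simp [Matrix.mulVec, Matrix.vecMulVec_apply, dotProduct, Finset.mul_sum, Finset.sum_mul,
    mul_assoc, mul_comm, mul_left_comm]

lemma trace_mul_vecMulVec (A : Matrix n n ℂ) (w v : n → ℂ) :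
    Matrix.trace (A * vecMulVec w v) = v ⬝ᵥ (A *ᵥ w) := by
  simp only [Matrix.trace, Matrix.diag, Matrix.mul_apply, Matrix.vecMulVec_apply, dotProduct,
    Matrix.mulVec, Finset.mul_sum]
  congr 1; ext j; congr 1; ext i; ring

lemma resolution (ν₁ ν₂ : Fin 2 → ℂ)
    (hν₁ : star ν₁ ⬝ᵥ ν₁ = 1) (hν₂ : star ν₂ ⬝ᵥ ν₂ = 1) (hν₁₂ : star ν₁ ⬝ᵥ ν₂ = 0) :
    vecMulVec ν₁ (star ν₁) + vecMulVec ν₂ (star ν₂) = 1 := by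
  have hν₂₁ : star ν₂ ⬝ᵥ ν₁ = 0 := by
    have := congrArg star hν₁₂
    simpa [dotProduct, star_sum, star_mul', mul_comm, Fin.sum_univ_two, add_comm] using this
  set U : Matrix (Fin 2) (Fin 2) ℂ := Matrix.of fun i j => ![ν₁, ν₂] j i with hU
  have h1 : Uᴴ * U = 1 := by
    ext i j
    fin_cases i <;> fin_cases j <;>
      simp only [Matrix.mul_apply, Matrix.conjTranspose_apply, hU, Matrix.of_apply,
        Fin.sum_univ_two, Matrix.cons_val_zero, Matrix.cons_val_one, Matrix.head_cons,
        Matrix.one_apply, Fin.zero_eta, Fin.mk_one] <;>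
      simp only [dotProduct, Fin.sum_univ_two, Pi.star_apply] at hν₁ hν₂ hν₁₂ hν₂₁ <;>
      first
        | simpa using hν₁
        | simpa using hν₂
        | simpa using hν₁₂
        | simpa using hν₂₁
  have h2 : U * Uᴴ = 1 := mul_eq_one_comm.mp h1
  ext i j
  have := congrFun (congrFun h2 i) j
  simp only [Matrix.mul_apply, Matrix.conjTranspose_apply, hU, Matrix.of_apply,
    Fin.sum_univ_two, Matrix.cons_val_zero, Matrix.cons_val_one, Matrix.head_cons] at this
  simp only [Matrix.add_apply, Matrix.vecMulVec_apply, Pi.star_apply]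
  rw [← this]

end Helpers

/-- `q₀⁽¹⁾ = C₂`, and for every `Q ∈ P_I(C₂)` with `Q < 1`,
`P_cor^opt(Q) = (1−Q)·C₂`, i.e. `R_cor^opt(Q) = C₂`. -/
theorem stmt7
    (q₁ q₂ : ℝ) (ρ₁ ρ₂ : Matrix (Fin 2) (Fin 2) ℂ)
    (hq₁ : 0 < q₁) (hq₂ : 0 < q₂) (hq : q₁ + q₂ = 1)
    (hρ₁ : ρ₁.PosSemidef) (htr₁ : ρ₁.trace = 1)
    (hρ₂ : ρ₂.PosSemidef) (htr₂ : ρ₂.trace = 1)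
    (hρ0 : (rho0 q₁ q₂ ρ₁ ρ₂).PosDef)
    (S : Matrix (Fin 2) (Fin 2) ℂ) (hS : S.PosSemidef) (hSS : S * S = rho0 q₁ q₂ ρ₁ ρ₂)
    (ν₁ ν₂ : Fin 2 → ℂ)
    (hν₁ : star ν₁ ⬝ᵥ ν₁ = 1) (hν₂ : star ν₂ ⬝ᵥ ν₂ = 1) (hν₁₂ : star ν₁ ⬝ᵥ ν₂ = 0)
    (C₁ C₂ : ℝ) (hC12 : C₁ ≤ C₂) (hCsum : 1 < C₁ + C₂)
    (hbar₁ : S * ((C₁ : ℂ) • vecMulVec ν₁ (star ν₁)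
        + ((1 - C₂ : ℝ) : ℂ) • vecMulVec ν₂ (star ν₂)) * S = (q₁ : ℂ) • ρ₁)
    (hbar₂ : S * (((1 - C₁ : ℝ) : ℂ) • vecMulVec ν₁ (star ν₁)
        + (C₂ : ℂ) • vecMulVec ν₂ (star ν₂)) * S = (q₂ : ℂ) • ρ₂)
    :
    q0high q₁ q₂ ρ₁ ρ₂ = C₂ ∧
      ∀ Q ∈ PIset C₂ q₁ q₂ ρ₁ ρ₂, Q < 1 →
        PcorOpt Q q₁ q₂ ρ₁ ρ₂ = (1 - Q) * C₂ := by
  have hSH : Sᴴ = S := hS.1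
  have hρ₀psd : (rho0 q₁ q₂ ρ₁ ρ₂).PosSemidef := hρ0.posSemidef
  have hC₂pos : 0 < C₂ := by linarith
  have hres : vecMulVec ν₁ (star ν₁) + vecMulVec ν₂ (star ν₂) = 1 :=
    resolution ν₁ ν₂ hν₁ hν₂ hν₁₂
  set P₁ := vecMulVec ν₁ (star ν₁) with hP₁def
  set P₂ := vecMulVec ν₂ (star ν₂) with hP₂def
  set R₁ : Matrix (Fin 2) (Fin 2) ℂ := (C₁ : ℂ) • P₁ + ((1 - C₂ : ℝ) : ℂ) • P₂ with hR₁def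
  set R₂ : Matrix (Fin 2) (Fin 2) ℂ := ((1 - C₁ : ℝ) : ℂ) • P₁ + (C₂ : ℂ) • P₂ with hR₂def
  have htrρ₀ : Matrix.trace (rho0 q₁ q₂ ρ₁ ρ₂) = 1 := by
    unfold rho0
    rw [Matrix.trace_add, Matrix.trace_smul, Matrix.trace_smul, htr₁, htr₂]
    push_cast
    simp only [smul_eq_mul, mul_one]
    exact_mod_cast hq
  -- cycling helper
  have cyc : ∀ (B M : Matrix (Fin 2) (Fin 2) ℂ),
      Matrix.trace (B * (S * M * S)) = Matrix.trace ((S * B * S) * M) := by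
    intro B M
    rw [show B * (S * M * S) = (B * S * M) * S by noncomm_ring,
      Matrix.trace_mul_comm,
      show S * (B * S * M) = (S * B * S) * M by noncomm_ring]
  have hbarpsd : ∀ {M : Matrix (Fin 2) (Fin 2) ℂ}, M.PosSemidef → (S * M * S).PosSemidef := by
    intro M h
    have := h.conjTranspose_mul_mul_same S
    rwa [hSH] at this
  have hD₁ : ((C₂ : ℂ) • (1 : Matrix (Fin 2) (Fin 2) ℂ) - R₁).PosSemidef := by
    have e : (C₂ : ℂ) • (1 : Matrix (Fin 2) (Fin 2) ℂ) - R₁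
        = ((C₂ - C₁ : ℝ) : ℂ) • P₁ + ((C₂ - (1 - C₂) : ℝ) : ℂ) • P₂ := by
      rw [← hres, hR₁def]; push_cast; module
    rw [e]
    exact (psd_real_smul (by linarith) (posSemidef_vecMulVec_star ν₁)).add
      (psd_real_smul (by linarith) (posSemidef_vecMulVec_star ν₂))
  have hD₂ : ((C₂ : ℂ) • (1 : Matrix (Fin 2) (Fin 2) ℂ) - R₂).PosSemidef := by
    have e : (C₂ : ℂ) • (1 : Matrix (Fin 2) (Fin 2) ℂ) - R₂
        = ((C₂ - (1 - C₁) : ℝ) : ℂ) • P₁ + ((0 : ℝ) : ℂ) • P₂ := by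
      rw [← hres, hR₂def]; push_cast; module
    rw [e]
    exact (psd_real_smul (by linarith) (posSemidef_vecMulVec_star ν₁)).add
      (psd_real_smul le_rfl (posSemidef_vecMulVec_star ν₂))
  -- the key inequality
  have key : ∀ M₀ M₁ M₂ : Matrix (Fin 2) (Fin 2) ℂ, IsPOVM M₀ M₁ M₂ →
      Pcor q₁ q₂ ρ₁ ρ₂ M₁ M₂ ≤ C₂ * (1 - PIof q₁ q₂ ρ₁ ρ₂ M₀) := by
    intro M₀ M₁ M₂ ⟨h0, h1, h2, hsum⟩
    have e1 : Matrix.trace (rho0 q₁ q₂ ρ₁ ρ₂ * M₀) + Matrix.trace (rho0 q₁ q₂ ρ₁ ρ₂ * M₁)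
        + Matrix.trace (rho0 q₁ q₂ ρ₁ ρ₂ * M₂) = 1 := by
      rw [← Matrix.trace_add, ← Matrix.trace_add, ← Matrix.mul_add, ← Matrix.mul_add, hsum,
        Matrix.mul_one, htrρ₀]
    have e1re : (Matrix.trace (rho0 q₁ q₂ ρ₁ ρ₂ * M₀)).re
        + (Matrix.trace (rho0 q₁ q₂ ρ₁ ρ₂ * M₁)).re
        + (Matrix.trace (rho0 q₁ q₂ ρ₁ ρ₂ * M₂)).re = 1 := by
      have := congrArg Complex.re e1
      simpa [Complex.add_re] using this
    -- trace(ρ₀ * M) = trace(S*M*S)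
    have etr : ∀ M : Matrix (Fin 2) (Fin 2) ℂ,
        Matrix.trace (rho0 q₁ q₂ ρ₁ ρ₂ * M) = Matrix.trace (S * M * S) := by
      intro M
      rw [← hSS]
      exact (Matrix.trace_mul_cycle S M S).symm
    -- q₁ tr(ρ₁ M₁) = tr(R₁ (S M₁ S))
    have eq₁ : (q₁ : ℂ) * Matrix.trace (ρ₁ * M₁) = Matrix.trace (R₁ * (S * M₁ * S)) := by
      rw [cyc, hbar₁, Matrix.smul_mul, Matrix.trace_smul, smul_eq_mul]
    have eq₂ : (q₂ : ℂ) * Matrix.trace (ρ₂ * M₂) = Matrix.trace (R₂ * (S * M₂ * S)) := by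
      rw [cyc, hbar₂, Matrix.smul_mul, Matrix.trace_smul, smul_eq_mul]
    have gap₁ : 0 ≤ C₂ * (Matrix.trace (S * M₁ * S)).re - (Matrix.trace (R₁ * (S * M₁ * S))).re := by
      have h := trace_mul_psd_nonneg hD₁ (hbarpsd h1)
      rw [Matrix.sub_mul, Matrix.smul_mul, Matrix.one_mul, Matrix.trace_sub,
        Matrix.trace_smul] at h
      simpa [Complex.sub_re, Complex.smul_re] using h
    have gap₂ : 0 ≤ C₂ * (Matrix.trace (S * M₂ * S)).re - (Matrix.trace (R₂ * (S * M₂ * S))).re := by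
      have h := trace_mul_psd_nonneg hD₂ (hbarpsd h2)
      rw [Matrix.sub_mul, Matrix.smul_mul, Matrix.one_mul, Matrix.trace_sub,
        Matrix.trace_smul] at h
      simpa [Complex.sub_re, Complex.smul_re] using h
    have re₁ : q₁ * (Matrix.trace (ρ₁ * M₁)).re = (Matrix.trace (R₁ * (S * M₁ * S))).re := by
      rw [← eq₁, Complex.re_ofReal_mul]
    have re₂ : q₂ * (Matrix.trace (ρ₂ * M₂)).re = (Matrix.trace (R₂ * (S * M₂ * S))).re := by
      rw [← eq₂, Complex.re_ofReal_mul]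
    have etr₁ := congrArg Complex.re (etr M₁)
    have etr₂ := congrArg Complex.re (etr M₂)
    unfold Pcor PIof
    rw [re₁, re₂]
    rw [etr₁, etr₂] at e1re
    nlinarith [gap₁, gap₂, e1re]
  have hPI0 : ∀ M₀ : Matrix (Fin 2) (Fin 2) ℂ, M₀.PosSemidef → 0 ≤ PIof q₁ q₂ ρ₁ ρ₂ M₀ :=
    fun M₀ h0 => trace_mul_psd_nonneg hρ₀psd h0
  have hPI1 : ∀ M₀ M₁ M₂ : Matrix (Fin 2) (Fin 2) ℂ, IsPOVM M₀ M₁ M₂ →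
      PIof q₁ q₂ ρ₁ ρ₂ M₀ ≤ 1 := by
    intro M₀ M₁ M₂ ⟨h0, h1, h2, hsum⟩
    have e1 : Matrix.trace (rho0 q₁ q₂ ρ₁ ρ₂ * M₀) + Matrix.trace (rho0 q₁ q₂ ρ₁ ρ₂ * M₁)
        + Matrix.trace (rho0 q₁ q₂ ρ₁ ρ₂ * M₂) = 1 := by
      rw [← Matrix.trace_add, ← Matrix.trace_add, ← Matrix.mul_add, ← Matrix.mul_add, hsum,
        Matrix.mul_one, htrρ₀]
    have e1re : (Matrix.trace (rho0 q₁ q₂ ρ₁ ρ₂ * M₀)).re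
        + (Matrix.trace (rho0 q₁ q₂ ρ₁ ρ₂ * M₁)).re
        + (Matrix.trace (rho0 q₁ q₂ ρ₁ ρ₂ * M₂)).re = 1 := by
      have := congrArg Complex.re e1
      simpa [Complex.add_re] using this
    have n1 := trace_mul_psd_nonneg hρ₀psd h1
    have n2 := trace_mul_psd_nonneg hρ₀psd h2
    unfold PIof
    linarith
  -- the trivial POVM (1,0,0)
  have hPOVM1 : IsPOVM 1 0 0 :=
    ⟨Matrix.PosSemidef.one, Matrix.PosSemidef.zero, Matrix.PosSemidef.zero, by simp⟩
  have hPI_one : PIof q₁ q₂ ρ₁ ρ₂ 1 = 1 := by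
    unfold PIof
    rw [Matrix.mul_one, htrρ₀]
    simp
  have hPcor_zero : Pcor q₁ q₂ ρ₁ ρ₂ 0 0 = 0 := by
    unfold Pcor
    simp
  have hPbar1 : ∀ q : ℝ, PbarCor q q₁ q₂ ρ₁ ρ₂ 1 0 0 = q := by
    intro q
    unfold PbarCor
    rw [hPI_one, hPcor_zero]
    ring
  -- boundedness
  have hbdd : ∀ q : ℝ,
      BddAbove {x : ℝ | ∃ M₀ M₁ M₂, IsPOVM M₀ M₁ M₂ ∧ PbarCor q q₁ q₂ ρ₁ ρ₂ M₀ M₁ M₂ = x} := by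
    intro q
    refine ⟨|q| + |C₂|, ?_⟩
    rintro x ⟨M₀, M₁, M₂, hP, rfl⟩
    have h1 := key _ _ _ hP
    have h2 := hPI0 _ hP.1
    have h3 := hPI1 _ _ _ hP
    unfold PbarCor
    nlinarith [le_abs_self q, le_abs_self C₂, abs_nonneg q, abs_nonneg C₂]
  have hOptC₂ : PbarOpt C₂ q₁ q₂ ρ₁ ρ₂ = C₂ := by
    unfold PbarOpt
    apply le_antisymm
    · refine csSup_le ⟨C₂, ⟨1, 0, 0, hPOVM1, hPbar1 C₂⟩⟩ ?_
      rintro x ⟨M₀, M₁, M₂, hP, rfl⟩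
      have h1 := key _ _ _ hP
      have h2 := hPI0 _ hP.1
      have h3 := hPI1 _ _ _ hP
      unfold PbarCor
      nlinarith
    · exact le_csSup (hbdd C₂) ⟨1, 0, 0, hPOVM1, hPbar1 C₂⟩
  -- special POVM achieving q(1-ε) + C₂ε
  have hspec : ∃ ε : ℝ, 0 < ε ∧ ∃ N₀ N₂ : Matrix (Fin 2) (Fin 2) ℂ, IsPOVM N₀ 0 N₂ ∧
      PIof q₁ q₂ ρ₁ ρ₂ N₀ = 1 - ε ∧ Pcor q₁ q₂ ρ₁ ρ₂ 0 N₂ = C₂ * ε := by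
    have hdetρ : (rho0 q₁ q₂ ρ₁ ρ₂).det ≠ 0 := hρ0.det_pos.ne'
    have hdetS : IsUnit S.det := by
      rw [isUnit_iff_ne_zero]
      intro h
      apply hdetρ
      rw [← hSS, Matrix.det_mul, h, mul_zero]
    have hSinv : S * S⁻¹ = 1 := Matrix.mul_nonsing_inv S hdetS
    set w : Fin 2 → ℂ := S⁻¹ *ᵥ ν₂ with hwdef
    have hSw : S *ᵥ w = ν₂ := by
      rw [hwdef, Matrix.mulVec_mulVec, hSinv, Matrix.one_mulVec]
    have hw0 : w ≠ 0 := by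
      intro h
      have : ν₂ = 0 := by rw [← hSw, h, Matrix.mulVec_zero]
      rw [this] at hν₂
      simp [dotProduct] at hν₂
    set ε' : ℝ := ∑ i, Complex.normSq (w i) with hε'def
    have hwc : star w ⬝ᵥ w = (ε' : ℂ) := by
      rw [hε'def]
      push_cast
      simp only [dotProduct, Pi.star_apply, Complex.star_def]
      congr 1
      ext i
      rw [mul_comm, Complex.mul_conj]
    have hε'pos : 0 < ε' := by
      obtain ⟨i, hi⟩ := Function.ne_iff.mp hw0
      exact Finset.sum_pos' (fun j _ => Complex.normSq_nonneg _)
        ⟨i, Finset.mem_univ i, Complex.normSq_pos.mpr hi⟩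
    have hε'ne : (ε' : ℂ) ≠ 0 := by exact_mod_cast hε'pos.ne'
    set V : Matrix (Fin 2) (Fin 2) ℂ := vecMulVec w (star w) with hVdef
    have hVpsd : V.PosSemidef := posSemidef_vecMulVec_star w
    set N₂ : Matrix (Fin 2) (Fin 2) ℂ := ((ε'⁻¹ : ℝ) : ℂ) • V with hN₂def
    have hN₂psd : N₂.PosSemidef := psd_real_smul (inv_nonneg.mpr hε'pos.le) hVpsd
    have hVsq : V * V = (ε' : ℂ) • V := by
      rw [← hwc, hVdef]
      ext i j
      simp only [Matrix.mul_apply, Matrix.vecMulVec_apply, Matrix.smul_apply, smul_eq_mul,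
        dotProduct, Pi.star_apply, Fin.sum_univ_two]
      ring
    have hN₂sq : N₂ * N₂ = N₂ := by
      rw [hN₂def, Matrix.smul_mul, Matrix.mul_smul, hVsq, smul_smul, smul_smul]
      congr 1
      push_cast
      field_simp
    have hherm : (1 - N₂).IsHermitian := Matrix.isHermitian_one.sub hN₂psd.1
    have hidem : (1 - N₂) * (1 - N₂) = 1 - N₂ := by
      rw [Matrix.mul_sub, Matrix.mul_one, Matrix.sub_mul, Matrix.one_mul, hN₂sq]
      abel
    have hN₀psd : (1 - N₂).PosSemidef := by
      have h := Matrix.posSemidef_conjTranspose_mul_self (1 - N₂)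
      rwa [hherm.eq, hidem] at h
    have hPOVM' : IsPOVM (1 - N₂) 0 N₂ :=
      ⟨hN₀psd, Matrix.PosSemidef.zero, hN₂psd, by abel⟩
    -- trace(ρ₀ N₂)
    have hSdot : ∀ x y : Fin 2 → ℂ, star x ⬝ᵥ (S *ᵥ y) = star (S *ᵥ x) ⬝ᵥ y := by
      intro x y
      rw [Matrix.star_mulVec, hSH, Matrix.dotProduct_mulVec]
    have htrV : Matrix.trace (rho0 q₁ q₂ ρ₁ ρ₂ * V) = 1 := by
      rw [hVdef, trace_mul_vecMulVec, ← hSS, ← Matrix.mulVec_mulVec, hSw, hSdot, hSw, hν₂]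
    have htrN₂ : Matrix.trace (rho0 q₁ q₂ ρ₁ ρ₂ * N₂) = ((ε'⁻¹ : ℝ) : ℂ) := by
      rw [hN₂def, Matrix.mul_smul, Matrix.trace_smul, htrV, smul_eq_mul, mul_one]
    have hPI' : PIof q₁ q₂ ρ₁ ρ₂ (1 - N₂) = 1 - ε'⁻¹ := by
      unfold PIof
      rw [Matrix.mul_sub, Matrix.mul_one, Matrix.trace_sub, htrρ₀, htrN₂]
      simp
    have hR₂ν₂ : R₂ *ᵥ ν₂ = (C₂ : ℂ) • ν₂ := by
      rw [hR₂def, Matrix.add_mulVec, Matrix.smul_mulVec, Matrix.smul_mulVec,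
        hP₁def, hP₂def, vecMulVec_mulVec, vecMulVec_mulVec, hν₁₂, hν₂]
      simp
    have htrρ₂V : (q₂ : ℂ) * Matrix.trace (ρ₂ * V) = (C₂ : ℂ) := by
      have : ((q₂ : ℂ) • ρ₂) * V = (S * R₂ * S) * V := by rw [hbar₂]
      calc (q₂ : ℂ) * Matrix.trace (ρ₂ * V) = Matrix.trace (((q₂ : ℂ) • ρ₂) * V) := by
            rw [Matrix.smul_mul, Matrix.trace_smul, smul_eq_mul]
        _ = Matrix.trace ((S * R₂ * S) * V) := by rw [this]
        _ = star w ⬝ᵥ ((S * R₂ * S) *ᵥ w) := by rw [trace_mul_vecMulVec]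
        _ = (C₂ : ℂ) := by
            have h1 : (S * R₂ * S) *ᵥ w = (C₂ : ℂ) • (S *ᵥ ν₂) := by
              have h2 : (S * R₂ * S) *ᵥ w = S *ᵥ (R₂ *ᵥ (S *ᵥ w)) := by
                simp only [Matrix.mulVec_mulVec, Matrix.mul_assoc]
              rw [h2, hSw, hR₂ν₂, Matrix.mulVec_smul]
            rw [h1, dotProduct_smul, hSdot, hSw, hν₂, smul_eq_mul, mul_one]
    have hPcor' : Pcor q₁ q₂ ρ₁ ρ₂ 0 N₂ = C₂ * ε'⁻¹ := by
      unfold Pcor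
      rw [Matrix.mul_zero, Matrix.trace_zero]
      have e : (q₂ : ℂ) * Matrix.trace (ρ₂ * N₂) = ((ε'⁻¹ : ℝ) : ℂ) * (C₂ : ℂ) := by
        rw [hN₂def, Matrix.mul_smul, Matrix.trace_smul, smul_eq_mul, mul_left_comm, htrρ₂V]
      have ere := congrArg Complex.re e
      rw [Complex.re_ofReal_mul] at ere
      simp only [Complex.zero_re, mul_zero, zero_add]
      rw [ere]
      simp [mul_comm]
    exact ⟨ε'⁻¹, inv_pos.mpr hε'pos, 1 - N₂, N₂, hPOVM', hPI', hPcor'⟩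
  constructor
  · -- q0high = C₂
    have hmemT : C₂ ∈ {q : ℝ | 0 < q ∧ (1 : ℝ) ∈ PIset q q₁ q₂ ρ₁ ρ₂} := by
      refine ⟨hC₂pos, ⟨1, 0, 0, hPOVM1, ?_, hPI_one⟩⟩
      rw [hPbar1 C₂, hOptC₂]
    have hlbT : ∀ q ∈ {q : ℝ | 0 < q ∧ (1 : ℝ) ∈ PIset q q₁ q₂ ρ₁ ρ₂}, C₂ ≤ q := by
      rintro q ⟨hq0, M₀, M₁, M₂, hP, hopt, hPI⟩
      obtain ⟨ε, hε, N₀, N₂, hP', hPI', hPcor'⟩ := hspec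
      by_contra hlt
      push_neg at hlt
      have h1 : PbarCor q q₁ q₂ ρ₁ ρ₂ M₀ M₁ M₂ ≤ q := by
        have hk := key _ _ _ hP
        rw [hPI] at hk
        unfold PbarCor
        rw [hPI]
        nlinarith
      have h2 : q * (1 - ε) + C₂ * ε
          ∈ {x : ℝ | ∃ M₀ M₁ M₂, IsPOVM M₀ M₁ M₂ ∧ PbarCor q q₁ q₂ ρ₁ ρ₂ M₀ M₁ M₂ = x} := by
        refine ⟨N₀, 0, N₂, hP', ?_⟩
        unfold PbarCor
        rw [hPI', hPcor']
      have h3 : q * (1 - ε) + C₂ * ε ≤ PbarOpt q q₁ q₂ ρ₁ ρ₂ := le_csSup (hbdd q) h2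
      rw [← hopt] at h3
      nlinarith
    exact le_antisymm (csInf_le ⟨C₂, hlbT⟩ hmemT) (le_csInf ⟨C₂, hmemT⟩ hlbT)
  · -- the conditional statement
    rintro Q ⟨M₀, M₁, M₂, hP, hopt, hPI⟩ _hQ
    rw [hOptC₂] at hopt
    have hPcorw : Pcor q₁ q₂ ρ₁ ρ₂ M₁ M₂ = (1 - Q) * C₂ := by
      unfold PbarCor at hopt
      rw [hPI] at hopt
      linarith
    have hub : ∀ x ∈ {x : ℝ | ∃ N₀ N₁ N₂, IsPOVM N₀ N₁ N₂ ∧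
        PIof q₁ q₂ ρ₁ ρ₂ N₀ = Q ∧ Pcor q₁ q₂ ρ₁ ρ₂ N₁ N₂ = x}, x ≤ (1 - Q) * C₂ := by
      rintro x ⟨N₀, N₁, N₂, hPN, hPIN, rfl⟩
      have hk := key _ _ _ hPN
      rw [hPIN] at hk
      linarith
    have hmem : (1 - Q) * C₂ ∈ {x : ℝ | ∃ N₀ N₁ N₂, IsPOVM N₀ N₁ N₂ ∧
        PIof q₁ q₂ ρ₁ ρ₂ N₀ = Q ∧ Pcor q₁ q₂ ρ₁ ρ₂ N₁ N₂ = x} :=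
      ⟨M₀, M₁, M₂, hP, hPI, hPcorw⟩
    exact le_antisymm (csSup_le ⟨_, hmem⟩ hub) (le_csSup ⟨(1 - Q) * C₂, hub⟩ hmem)

end FRIR
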